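/- Let p, q be primes with q dividing (p^p-1)/(p-1), and let N = V ⋊ C_q with V = F_p^p and C_q acting via a matrix M of order q. Then N has no subgroup of order p^i q for any i with 0 < i < p. -/

import Mathlib

lemma aux_ne (p q : ℕ) (hp : p.Prime) (hq : q.Prime)
    (hdvd : q ∣ ∑ i ∈ Finset.range p, p ^ i) : p ≠ q := by
  rintro rfl
  haveI := Fact.mk hp
  have h0 : ((∑ i ∈ Finset.range p, p ^ i : ℕ) : ZMod p) = 0 := by
    exact_mod_cast (ZMod.natCast_eq_zero_iff _ _).2 hdvd
  push_cast at h0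
  rw [ZMod.natCast_self] at h0
  simp [zero_pow_eq, Finset.sum_ite_eq', hp.pos] at h0


lemma aux_ord (p q : ℕ) (hp : p.Prime) (hq : q.Prime)
    (hdvd : q ∣ ∑ i ∈ Finset.range p, p ^ i) (m : ℕ) (hm0 : 0 < m) (hmp : m < p) :
    ¬ q ∣ p ^ m - 1 := by
  haveI := Fact.mk hq
  have hpq : p ≠ q := aux_ne p q hp hq hdvd
  set u : ZMod q := ((p : ℕ) : ZMod q) with hu
  have hsum : (∑ i ∈ Finset.range p, u ^ i) = 0 := by
    have h0 : ((∑ i ∈ Finset.range p, p ^ i : ℕ) : ZMod q) = 0 :=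
      (ZMod.natCast_eq_zero_iff _ _).2 hdvd
    push_cast at h0
    exact h0
  have hup : u ^ p = 1 := by
    have := geom_sum_mul u p
    rw [hsum, zero_mul] at this
    have : u ^ p - 1 = 0 := this.symm
    linear_combination this
  have hord : orderOf u = p := by
    have hdvd' : orderOf u ∣ p := orderOf_dvd_of_pow_eq_one hup
    rcases (Nat.Prime.eq_one_or_self_of_dvd hp _ hdvd') with h1 | h1
    · exfalso
      have : u = 1 := orderOf_eq_one_iff.1 h1
      rw [this] at hsum
      simp at hsum
      have : q ∣ p := (ZMod.natCast_eq_zero_iff _ _).1 hsum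
      exact hpq ((hp.eq_one_or_self_of_dvd q this).resolve_left hq.ne_one).symm
    · exact h1
  intro hdm
  have h1 : 1 ≤ p ^ m := Nat.one_le_pow _ _ hp.pos
  have : ((p ^ m - 1 : ℕ) : ZMod q) = 0 := (ZMod.natCast_eq_zero_iff _ _).2 hdm
  rw [Nat.cast_sub h1] at this
  push_cast at this
  have hum : u ^ m = 1 := by linear_combination this
  have : p ∣ m := hord ▸ orderOf_dvd_of_pow_eq_one hum
  exact absurd (Nat.le_of_dvd hm0 this) (not_le.2 hmp)

lemma aux_gl (p q d : ℕ) (hp : p.Prime) (hq : q.Prime)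
    (hdvd : q ∣ ∑ i ∈ Finset.range p, p ^ i) (hd0 : 0 < d) (hdp : d < p) :
    ¬ q ∣ Nat.card (GL (Fin d) (ZMod p)) := by
  haveI := Fact.mk hp
  intro hdvd'
  rw [Matrix.card_GL_field, ZMod.card] at hdvd'
  obtain ⟨j, -, hj⟩ := (Prime.dvd_finset_prod_iff hq.prime _).1 hdvd'
  have hle : p ^ (j : ℕ) ≤ p ^ d := Nat.pow_le_pow_right hp.pos j.2.le
  have hfact : p ^ d - p ^ (j : ℕ) = p ^ (j : ℕ) * (p ^ (d - (j : ℕ)) - 1) := by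
    rw [Nat.mul_sub, mul_one, ← pow_add, Nat.add_sub_cancel' j.2.le]
  rw [hfact] at hj
  rcases (Nat.Prime.dvd_mul hq).1 hj with h | h
  · exact aux_ne p q hp hq hdvd (((Nat.prime_dvd_prime_iff_eq hq hp).1
      (hq.dvd_of_dvd_pow h)).symm)
  · exact aux_ord p q hp hq hdvd (d - j) (Nat.sub_pos_of_lt j.2) (lt_of_le_of_lt (Nat.sub_le _ _) hdp) h

lemma aux_unit {p : ℕ} [Fact p.Prime] {W : Type} [AddCommGroup W] [Module (ZMod p) W]
    [Module.Finite (ZMod p) W] [Finite W] (f : W →ₗ[ZMod p] W) (q : ℕ) (hq : q.Prime)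
    (hfq : f ^ q = 1) (hne : f ≠ 1) :
    q ∣ Nat.card (GL (Fin (Module.finrank (ZMod p) W)) (ZMod p)) := by
  have hord : orderOf f ∣ q := orderOf_dvd_of_pow_eq_one hfq
  have hordq : orderOf f = q := by
    rcases (hq.eq_one_or_self_of_dvd _ hord) with h | h
    · exact absurd (orderOf_eq_one_iff.1 h) hne
    · exact h
  have hunit : IsUnit f := IsUnit.of_pow_eq_one hfq hq.ne_zero
  have h1 : orderOf hunit.unit = q := by
    rw [← hordq, ← orderOf_units, IsUnit.unit_spec]
  haveI : Finite ((W →ₗ[ZMod p] W)ˣ) := by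
    haveI : Finite (W →ₗ[ZMod p] W) := by
      exact Finite.of_injective _ LinearMap.coe_injective
    exact Finite.of_injective (Units.val) Units.val_injective
  have h2 : q ∣ Nat.card ((W →ₗ[ZMod p] W)ˣ) := h1 ▸ orderOf_dvd_natCard hunit.unit
  have b := Module.finBasis (ZMod p) W
  have e : (W →ₗ[ZMod p] W) ≃* Matrix (Fin (Module.finrank (ZMod p) W)) (Fin (Module.finrank (ZMod p) W)) (ZMod p) :=
    (LinearMap.toMatrixAlgEquiv b).toMulEquiv
  have e2 := Units.mapEquiv e
  rwa [Nat.card_congr e2.toEquiv] at h2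

lemma aux_irred (p q : ℕ) (hp : p.Prime) (hq : q.Prime)
    (hdvd : q ∣ ∑ i ∈ Finset.range p, p ^ i)
    (M : GL (Fin p) (ZMod p)) (hM : orderOf M = q)
    (W : Submodule (ZMod p) (Fin p → ZMod p))
    (hinv : ∀ v ∈ W, (M : Matrix (Fin p) (Fin p) (ZMod p)).mulVec v ∈ W)
    (i : ℕ) (hi1 : 0 < i) (hi2 : i < p) (hcard : Nat.card W = p ^ i) : False := by
  haveI := Fact.mk hp
  have hpq : p ≠ q := aux_ne p q hp hq hdvd
  set e := Matrix.toLinAlgEquiv' (R := ZMod p) (n := Fin p) with he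
  set L : (Fin p → ZMod p) →ₗ[ZMod p] (Fin p → ZMod p) := e (M : Matrix (Fin p) (Fin p) (ZMod p)) with hL
  have hLapp : ∀ v, L v = (M : Matrix (Fin p) (Fin p) (ZMod p)).mulVec v := fun v => rfl
  have hLq : L ^ q = 1 := by
    rw [hL, ← map_pow, ← Units.val_pow_eq_pow_val, ← hM, pow_orderOf_eq_one, Units.val_one, map_one]
  -- the restriction to W
  have hinv' : ∀ v ∈ W, L v ∈ W := by intro v hv; rw [hLapp]; exact hinv v hv
  set f := L.restrict hinv' with hf
  have hfpow : ∀ (k : ℕ) (w : W), ((f ^ k) w : Fin p → ZMod p) = (L ^ k) (w : Fin p → ZMod p) := by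
    intro k
    induction k with
    | zero => intro w; simp
    | succ n ih =>
      intro w
      rw [pow_succ, pow_succ, Module.End.mul_apply, Module.End.mul_apply, ih (f w)]
      rfl
  have hfq : f ^ q = 1 := by
    ext w
    rw [hfpow q w, hLq]
    rfl
  -- finrank of W is i
  have hfinW : Module.finrank (ZMod p) W = i := by
    haveI : Fintype W := Fintype.ofFinite _
    have hc : Fintype.card W = Fintype.card (ZMod p) ^ Module.finrank (ZMod p) W :=
      Module.card_eq_pow_finrank
    rw [ZMod.card, ← Nat.card_eq_fintype_card, hcard] at hc
    exact (Nat.pow_right_injective hp.two_le hc.symm)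
  -- quotient
  have hle : W ≤ W.comap L := fun v hv => hinv' v hv
  set g := Submodule.mapQ W W L hle with hg
  have hgpow : ∀ (k : ℕ) (x : Fin p → ZMod p), (g ^ k) (W.mkQ x) = W.mkQ ((L ^ k) x) := by
    intro k
    induction k with
    | zero => intro x; simp
    | succ n ih =>
      intro x
      have h1 : g (W.mkQ x) = W.mkQ (L x) := by
        rw [hg, Submodule.mkQ_apply, Submodule.mapQ_apply, Submodule.mkQ_apply]
      rw [pow_succ, Module.End.mul_apply, h1, ih (L x), pow_succ]
      rfl
  have hgq : g ^ q = 1 := by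
    refine Submodule.linearMap_qext _ ?_
    ext x
    simp only [LinearMap.comp_apply, Module.End.one_apply]
    rw [hgpow q, hLq]
    rfl
  have hfinQ : Module.finrank (ZMod p) ((Fin p → ZMod p) ⧸ W) = p - i := by
    have h1 := Submodule.finrank_quotient_add_finrank W
    rw [Module.finrank_fintype_fun_eq_card, Fintype.card_fin, hfinW] at h1
    omega
  -- f = 1
  have hf1 : f = 1 := by
    by_contra hne
    have := aux_unit f q hq hfq hne
    rw [hfinW] at this
    exact aux_gl p q i hp hq hdvd hi1 hi2 this
  -- g = 1
  have hg1 : g = 1 := by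
    by_contra hne
    have := aux_unit g q hq hgq hne
    rw [hfinQ] at this
    exact aux_gl p q (p - i) hp hq hdvd (by omega) (by omega) this
  -- now L = 1 + Nl with Nl^2 = 0
  set Nl := L - 1 with hNl
  have hNlW : ∀ v, Nl v ∈ W := by
    intro v
    have h2 : g (W.mkQ v) = W.mkQ v := by rw [hg1]; rfl
    rw [hg, Submodule.mkQ_apply, Submodule.mapQ_apply] at h2
    have h3 := (Submodule.Quotient.eq W).1 h2
    simpa [hNl, LinearMap.sub_apply] using h3
  have hNl0 : ∀ w ∈ W, Nl w = 0 := by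
    intro w hw
    have : f ⟨w, hw⟩ = ⟨w, hw⟩ := by rw [hf1]; rfl
    have h2 : L w = w := congrArg Subtype.val this
    simp [hNl, LinearMap.sub_apply, h2]
  have hpowk : ∀ k : ℕ, L ^ k = 1 + (k : ZMod p) • Nl := by
    intro k
    induction k with
    | zero => simp
    | succ n ih =>
      have hNl2 : Nl * Nl = 0 := LinearMap.ext fun v => hNl0 _ (hNlW v)
      have hcomm : L = 1 + Nl := by rw [hNl]; abel
      rw [pow_succ, ih]
      push_cast
      rw [add_smul, one_smul]
      conv_lhs => rw [hcomm]
      rw [mul_add, mul_one, add_mul, one_mul, smul_mul_assoc, hNl2, smul_zero, add_zero]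
      abel
  have hLp : L ^ p = 1 := by
    rw [hpowk p, ZMod.natCast_self, zero_smul, add_zero]
  have hMp : M ^ p = 1 := by
    have h1 : ((M : Matrix (Fin p) (Fin p) (ZMod p)) ^ p) = 1 := by
      apply e.injective
      rw [map_pow, map_one]
      exact hLp
    ext1
    rw [Units.val_pow_eq_pow_val, h1, Units.val_one]
  have : q ∣ p := hM ▸ orderOf_dvd_of_pow_eq_one hMp
  exact hpq ((Nat.prime_dvd_prime_iff_eq hq hp).1 this).symm

section
open SemidirectProduct

theorem stmt_17 (p q : ℕ) (hp : p.Prime) (hq : q.Prime)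
    (hdvd : q ∣ ∑ i ∈ Finset.range p, p ^ i)
    (M : GL (Fin p) (ZMod p)) (hM : orderOf M = q)
    (φ : Multiplicative (ZMod q) →* MulAut (Multiplicative (Fin p → ZMod p)))
    (hφ : ∀ v : Fin p → ZMod p,
      φ (Multiplicative.ofAdd (1 : ZMod q)) (Multiplicative.ofAdd v) =
        Multiplicative.ofAdd ((M : Matrix (Fin p) (Fin p) (ZMod p)).mulVec v))
    (i : ℕ) (hi1 : 0 < i) (hi2 : i < p) :
    ¬ ∃ H : Subgroup
        (SemidirectProduct (Multiplicative (Fin p → ZMod p)) (Multiplicative (ZMod q)) φ),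
      Nat.card H = p ^ i * q := by
  haveI := Fact.mk hq
  haveI := Fact.mk hp
  haveI : NeZero q := ⟨hq.ne_zero⟩
  rintro ⟨H, hH⟩
  have hpq : p ≠ q := aux_ne p q hp hq hdvd
  set G := SemidirectProduct (Multiplicative (Fin p → ZMod p)) (Multiplicative (ZMod q)) φ
    with hG
  set f : H →* Multiplicative (ZMod q) := rightHom.comp H.subtype with hfdef
  -- the additive subgroup S
  set S : AddSubgroup (Fin p → ZMod p) :=
    { carrier := {v | (inl (Multiplicative.ofAdd v) : G) ∈ H}
      zero_mem' := by
        show (inl (Multiplicative.ofAdd (0 : Fin p → ZMod p)) : G) ∈ H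
        simpa using H.one_mem
      add_mem' := by
        intro a b ha hb
        show (inl (Multiplicative.ofAdd (a + b)) : G) ∈ H
        rw [ofAdd_add, map_mul]
        exact H.mul_mem ha hb
      neg_mem' := by
        intro a ha
        show (inl (Multiplicative.ofAdd (-a)) : G) ∈ H
        rw [ofAdd_neg, map_inv]
        exact H.inv_mem ha } with hSdef
  -- the kernel of f is equivalent to S
  have hright : ∀ x : f.ker, ((x : H) : G).right = 1 := fun x => x.2
  have hker_eq : ∀ x : f.ker, (inl (((x : H) : G).left) : G) = ((x : H) : G) := by
    intro x
    conv_rhs => rw [← inl_left_mul_inr_right (((x : H) : G))]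
    rw [hright x, map_one, mul_one]
  have eker : f.ker ≃ S := by
    refine ⟨fun x => ⟨Multiplicative.toAdd ((x : H) : G).left, ?_⟩,
      fun v => ⟨⟨inl (Multiplicative.ofAdd v.1), v.2⟩, ?_⟩, ?_, ?_⟩
    · show (inl (Multiplicative.ofAdd (Multiplicative.toAdd ((x : H) : G).left)) : G) ∈ H
      rw [ofAdd_toAdd, hker_eq x]
      exact ((x : H)).2
    · show f _ = 1
      simp [hfdef]
    · intro x
      ext : 2
      exact hker_eq x
    · intro v
      rfl
  -- cardinalities
  have hcards : Nat.card H = Nat.card f.range * Nat.card f.ker := by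
    rw [Subgroup.card_eq_card_quotient_mul_card_subgroup f.ker,
      Nat.card_congr (QuotientGroup.quotientKerEquivRange f).toEquiv]
  have hSker : Nat.card S = Nat.card f.ker := Nat.card_congr eker.symm
  have hcardMq : Nat.card (Multiplicative (ZMod q)) = q := by
    rw [Nat.card_congr Multiplicative.toAdd, Nat.card_zmod]
  have hrange_dvd : Nat.card f.range ∣ q := by
    have := Subgroup.card_subgroup_dvd_card f.range
    rwa [hcardMq] at this
  have hS_dvd : Nat.card S ∣ p ^ p := by
    have h1 := AddSubgroup.card_addSubgroup_dvd_card S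
    have h2 : Nat.card (Fin p → ZMod p) = p ^ p := by
      rw [Nat.card_pi]
      simp [Nat.card_zmod]
    rwa [h2] at h1
  have hrq : Nat.card f.range = q := by
    rcases hq.eq_one_or_self_of_dvd _ hrange_dvd with h | h
    · exfalso
      rw [hH, h, one_mul] at hcards
      have : q ∣ p ^ p := by
        refine dvd_trans ?_ (hSker ▸ hS_dvd)
        rw [← hcards]
        exact dvd_mul_left q (p ^ i)
      exact hpq ((Nat.prime_dvd_prime_iff_eq hq hp).1 (hq.dvd_of_dvd_pow this)).symm
    · exact h
  have hkercard : Nat.card f.ker = p ^ i := by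
    rw [hH, hrq] at hcards
    have hq0 : 0 < q := hq.pos
    nlinarith [hcards]
  -- range is everything
  have hrtop : f.range = ⊤ := by
    apply Subgroup.eq_top_of_card_eq
    rw [hrq, hcardMq]
  obtain ⟨x, hx⟩ : ∃ x : H, f x = Multiplicative.ofAdd (1 : ZMod q) := by
    have : Multiplicative.ofAdd (1 : ZMod q) ∈ f.range := by rw [hrtop]; trivial
    exact this
  -- conjugation lemma
  have key : ∀ (g : G) (n : Multiplicative (Fin p → ZMod p)),
      g * inl n * g⁻¹ = inl (φ (rightHom g) n) := by
    intro g n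
    conv_lhs => rw [← inl_left_mul_inr_right g]
    have h1 : (inl g.left * inr g.right : G) * inl n * ((inr g.right)⁻¹ * (inl g.left)⁻¹)
        = inl g.left * (inr g.right * inl n * (inr g.right)⁻¹) * (inl g.left)⁻¹ := by
      group
    rw [mul_inv_rev]
    rw [h1, ← map_inv inr, ← map_inv inl, ← inl_aut, ← map_mul, ← map_mul, rightHom_eq_right]
    congr 1
    rw [mul_right_comm, mul_inv_cancel, one_mul]
  -- invariance of S
  have hinvS : ∀ v ∈ S, (M : Matrix (Fin p) (Fin p) (ZMod p)).mulVec v ∈ S := by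
    intro v hv
    have hmem : ((x : G) * inl (Multiplicative.ofAdd v) * (x : G)⁻¹ : G) ∈ H :=
      H.mul_mem (H.mul_mem (x : H).2 hv) (H.inv_mem (x : H).2)
    rw [key, show rightHom ((x : H) : G) = Multiplicative.ofAdd (1 : ZMod q) from hx,
      hφ v] at hmem
    exact hmem
  -- transfer to a submodule
  set W : Submodule (ZMod p) (Fin p → ZMod p) := AddSubgroup.toZModSubmodule p S with hW
  have hmemW : ∀ v, v ∈ W ↔ v ∈ S := fun v => Iff.rfl
  have hinvW : ∀ v ∈ W, (M : Matrix (Fin p) (Fin p) (ZMod p)).mulVec v ∈ W := by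
    intro v hv
    exact (hmemW _).2 (hinvS v ((hmemW v).1 hv))
  have hcardW : Nat.card W = p ^ i := by
    rw [← hkercard, ← hSker]
    exact Nat.card_congr ⟨fun x => ⟨x.1, x.2⟩, fun x => ⟨x.1, x.2⟩, fun x => rfl, fun x => rfl⟩
  exact aux_irred p q hp hq hdvd M hM W hinvW i hi1 hi2 hcardW

end
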